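/- arXiv:1611.09027 — 5 statements merged into one kernel-verified Lean document; each statement's English description precedes it below -/
import Mathlib

section
/- For every d ≥ 1 and every β > 0, the diamagnetic conductivity of the perfect conductor is strictly positive: ∫_{[−π,π]^d} cos(p₁)/(1 + e^{βE(p)}) d^d p > 0. In particular, the constant σ_d^{(β,0)} = 2(2π)^{−d} ∫_{[−π,π]^d} cos(p₁)/(1 + e^{βE(p)}) d^d p is nonzero. -/
set_option maxHeartbeats 1000000

open MeasureTheory

open Real in
private lemma oneD_pos (β : ℝ) (hβ : 0 < β) (A : ℝ) :
    0 < ∫ x in Set.Icc (-π) π, Real.cos x / (1 + Real.exp (β * (2 * (A - Real.cos x)))) := by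
  have hπ := Real.pi_pos
  set g : ℝ → ℝ := fun x => Real.cos x / (1 + Real.exp (β * (2 * (A - Real.cos x)))) with hg
  have hden : ∀ x : ℝ, (0:ℝ) < 1 + Real.exp (β * (2 * (A - Real.cos x))) := fun x => by positivity
  have hcont : Continuous g := by
    apply Continuous.div (by fun_prop) (by fun_prop) (fun x => (hden x).ne')
  have hint : ∀ a b : ℝ, IntervalIntegrable g volume a b := fun a b => hcont.intervalIntegrable a b
  have hIcc : (∫ x in Set.Icc (-π) π, g x) = ∫ x in (-π)..π, g x := by
    rw [intervalIntegral.integral_of_le (by linarith), MeasureTheory.integral_Icc_eq_integral_Ioc]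
  rw [hIcc]
  have heven : ∀ x : ℝ, g (-x) = g x := fun x => by simp [hg, Real.cos_neg]
  have h1 : (∫ x in (0:ℝ)..π, g x) = ∫ x in (-π)..(0:ℝ), g x := by
    calc (∫ x in (0:ℝ)..π, g x) = ∫ x in (0:ℝ)..π, g (-x) :=
          intervalIntegral.integral_congr fun x _ => (heven x).symm
      _ = ∫ x in (-π)..(-0:ℝ), g x := intervalIntegral.integral_comp_neg g
      _ = ∫ x in (-π)..(0:ℝ), g x := by norm_num
  have hsplit : (∫ x in (-π)..π, g x) = 2 * ∫ x in (0:ℝ)..π, g x := by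
    rw [← intervalIntegral.integral_add_adjacent_intervals (hint (-π) 0) (hint 0 π), ← h1]
    ring
  rw [hsplit]
  have h2 : (∫ x in (0:ℝ)..(π/2), g (π - x)) = ∫ x in (π/2)..π, g x := by
    have h := intervalIntegral.integral_comp_sub_left (a := 0) (b := π/2) g π
    rwa [show π - π/2 = π/2 by ring, sub_zero] at h
  have hint2 : IntervalIntegrable (fun x => g (π - x)) volume 0 (π/2) :=
    (hcont.comp (continuous_const.sub continuous_id)).intervalIntegrable 0 (π/2)
  have hsplit2 : (∫ x in (0:ℝ)..π, g x) = ∫ x in (0:ℝ)..(π/2), (g x + g (π - x)) := by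
    rw [intervalIntegral.integral_add (hint 0 (π/2)) hint2, h2,
      intervalIntegral.integral_add_adjacent_intervals (hint 0 (π/2)) (hint (π/2) π)]
  rw [hsplit2]
  have hpos : 0 < ∫ x in (0:ℝ)..(π/2), (g x + g (π - x)) := by
    apply intervalIntegral.intervalIntegral_pos_of_pos_on ((hint 0 (π/2)).add hint2)
    · intro x hx
      have hc : 0 < Real.cos x := Real.cos_pos_of_mem_Ioo ⟨by linarith [hx.1], hx.2⟩
      have key : g (π - x) = -(Real.cos x / (1 + Real.exp (β * (2 * (A + Real.cos x))))) := by
        simp [hg, Real.cos_pi_sub, sub_neg_eq_add, neg_div]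
      rw [key]
      have hlt : Real.exp (β * (2 * (A - Real.cos x))) < Real.exp (β * (2 * (A + Real.cos x))) := by
        apply Real.exp_lt_exp.2; nlinarith
      have hd := div_lt_div_of_pos_left hc (hden x) (by linarith :
        (1 + Real.exp (β * (2 * (A - Real.cos x)))) < 1 + Real.exp (β * (2 * (A + Real.cos x))))
      simp only [hg]
      linarith
    · linarith
  linarith

/-- Strict positivity of the diamagnetic conductivity of the perfect conductor:
`∫_{[−π,π]^d} cos(p₁)/(1+e^{βE(p)}) d^d p > 0` where `E(p) = 2[d − Σᵢ cos pᵢ]`,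
and in particular `σ_d^{(β,0)} = 2(2π)^{−d} ∫ cos(p₁)/(1+e^{βE(p)}) ≠ 0`. -/
theorem diamagnetic_conductivity_positive (d : ℕ) (hd : 1 ≤ d) (β : ℝ) (hβ : 0 < β) :
    (0 < ∫ p in Set.Icc (fun _ : Fin d => -Real.pi) (fun _ : Fin d => Real.pi),
        Real.cos (p ⟨0, hd⟩) /
          (1 + Real.exp (β * (2 * ((d : ℝ) - ∑ i : Fin d, Real.cos (p i)))))) ∧
    2 * ((2 * Real.pi) ^ d)⁻¹ *
        (∫ p in Set.Icc (fun _ : Fin d => -Real.pi) (fun _ : Fin d => Real.pi),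
          Real.cos (p ⟨0, hd⟩) /
            (1 + Real.exp (β * (2 * ((d : ℝ) - ∑ i : Fin d, Real.cos (p i)))))) ≠ 0 := by
  have hπ := Real.pi_pos
  have key : 0 < ∫ p in Set.Icc (fun _ : Fin d => -Real.pi) (fun _ : Fin d => Real.pi),
      Real.cos (p ⟨0, hd⟩) /
        (1 + Real.exp (β * (2 * ((d : ℝ) - ∑ i : Fin d, Real.cos (p i))))) := by
    obtain ⟨n, rfl⟩ : ∃ n, d = n + 1 := ⟨d - 1, by omega⟩
    set μ₀ : Measure ℝ := volume.restrict (Set.Icc (-Real.pi) Real.pi) with hμ₀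
    set ν : Measure (Fin n → ℝ) := Measure.pi fun _ => μ₀ with hν
    set F : (Fin (n+1) → ℝ) → ℝ := fun p => Real.cos (p ⟨0, hd⟩) /
        (1 + Real.exp (β * (2 * (((n+1:ℕ):ℝ) - ∑ i : Fin (n+1), Real.cos (p i))))) with hF
    have hcast : ((n+1 : ℕ) : ℝ) = (n : ℝ) + 1 := by push_cast; ring
    have hFden : ∀ p : Fin (n+1) → ℝ,
        (0:ℝ) < 1 + Real.exp (β * (2 * (((n+1:ℕ):ℝ) - ∑ i : Fin (n+1), Real.cos (p i)))) :=
      fun p => by positivity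
    have hFcont : Continuous F := by
      apply Continuous.div (by fun_prop) (by fun_prop) (fun p => (hFden p).ne')
    -- the restricted volume is a product measure
    have hres : (volume : Measure (Fin (n+1) → ℝ)).restrict
        (Set.Icc (fun _ : Fin (n+1) => -Real.pi) (fun _ : Fin (n+1) => Real.pi)) =
        Measure.pi fun _ : Fin (n+1) => μ₀ := by
      refine (Measure.pi_eq fun s hs => ?_).symm
      rw [← Set.pi_univ_Icc, Measure.restrict_apply (MeasurableSet.univ_pi fun i => hs i),
        ← Set.pi_inter_distrib, MeasureTheory.volume_pi_pi]
      exact Finset.prod_congr rfl fun i _ => (Measure.restrict_apply (hs i)).symm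
    set e := MeasurableEquiv.piFinSuccAbove (fun _ : Fin (n+1) => ℝ) 0 with he
    have hmp : MeasurePreserving e (Measure.pi fun _ : Fin (n+1) => μ₀)
        (μ₀.prod ν) := measurePreserving_piFinSuccAbove (fun _ : Fin (n+1) => μ₀) 0
    have hFint : Integrable F (Measure.pi fun _ : Fin (n+1) => μ₀) := by
      rw [← hres]
      exact hFcont.continuousOn.integrableOn_compact isCompact_Icc
    have hfint : Integrable (fun z : ℝ × (Fin n → ℝ) => F (e.symm z)) (μ₀.prod ν) := by
      rw [← hmp.map_eq, integrable_map_equiv e (fun z => F (e.symm z))]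
      have hcomp : ((fun z : ℝ × (Fin n → ℝ) => F (e.symm z)) ∘ ⇑e) = F := by
        funext p
        simp only [Function.comp_apply, MeasurableEquiv.symm_apply_apply]
      rw [hcomp]
      exact hFint
    have hFsymm : ∀ (x : ℝ) (y : Fin n → ℝ), F (e.symm (x, y)) =
        Real.cos x / (1 + Real.exp (β * (2 * ((((n+1:ℕ):ℝ) - ∑ j : Fin n, Real.cos (y j))
          - Real.cos x)))) := by
      intro x y
      have hrfl : F (e.symm (x, y)) = Real.cos ((Fin.insertNth (α := fun _ : Fin (n+1) => ℝ) 0 x y) 0) /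
          (1 + Real.exp (β * (2 * (((n+1:ℕ):ℝ) -
            ∑ i : Fin (n+1), Real.cos (Fin.insertNth (α := fun _ : Fin (n+1) => ℝ) 0 x y i))))) := rfl
      rw [hrfl, Fin.sum_univ_succAbove (fun i => Real.cos (Fin.insertNth (α := fun _ : Fin (n+1) => ℝ) 0 x y i)) 0,
        Fin.insertNth_apply_same]
      simp only [Fin.insertNth_apply_succAbove]
      ring_nf
    -- reduce to iterated integral
    have hiter : (∫ p in Set.Icc (fun _ : Fin (n+1) => -Real.pi) (fun _ : Fin (n+1) => Real.pi),
        F p) = ∫ y, ∫ x, F (e.symm (x, y)) ∂μ₀ ∂ν := by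
      rw [hres, ← MeasurePreserving.integral_comp' (MeasurePreserving.symm e hmp) F]
      exact integral_prod_symm _ hfint
    have Gpos : ∀ y : Fin n → ℝ, 0 < ∫ x, F (e.symm (x, y)) ∂μ₀ := by
      intro y
      have := oneD_pos β hβ (((n+1:ℕ):ℝ) - ∑ j : Fin n, Real.cos (y j))
      simpa only [hFsymm, hμ₀] using this
    have Gint : Integrable (fun y => ∫ x, F (e.symm (x, y)) ∂μ₀) ν :=
      hfint.integral_prod_right
    have hνuniv : 0 < ν Set.univ := by
      rw [hν, Measure.pi_univ]
      refine CanonicallyOrderedAdd.prod_pos.2 fun i _ => ?_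
      rw [hμ₀, Measure.restrict_apply_univ, Real.volume_Icc]
      exact ENNReal.ofReal_pos.2 (by linarith)
    have hpos : 0 < ∫ y, ∫ x, F (e.symm (x, y)) ∂μ₀ ∂ν := by
      rw [integral_pos_iff_support_of_nonneg (fun y => (Gpos y).le) Gint]
      have hsupp : (Function.support fun y => ∫ x, F (e.symm (x, y)) ∂μ₀) = Set.univ :=
        Set.eq_univ_of_forall fun y => (Gpos y).ne'
      rw [hsupp]
      exact hνuniv
    rw [show (∫ p in Set.Icc (fun _ : Fin (n+1) => -Real.pi) (fun _ : Fin (n+1) => Real.pi),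
        Real.cos (p ⟨0, hd⟩) / (1 + Real.exp (β * (2 * (((n+1:ℕ):ℝ) -
          ∑ i : Fin (n+1), Real.cos (p i)))))) = ∫ p in Set.Icc (fun _ : Fin (n+1) => -Real.pi)
        (fun _ : Fin (n+1) => Real.pi), F p from rfl, hiter]
    exact hpos
  refine ⟨key, ne_of_gt (mul_pos (by positivity) key)⟩
end

section
/- Let d ≥ 1, β > 0, λ ≥ 0, and let ω : ℤ^d → [−1,1]. Let V_ω be the multiplication operator by ω on ℓ²(ℤ^d) and let Δ_d be the discrete Laplacian. Then the Fermi symbols satisfy ‖(1 + e^{β(Δ_d + λV_ω)})^{−1} − (1 + e^{βΔ_d})^{−1}‖_op ≤ β λ e^{β(4d+λ)}. In particular, the Fermi symbol of the Anderson tight-binding model converges in operator norm to that of the free Laplacian, uniformly in the disorder realization ω, as λ → 0⁺. -/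
open scoped ENNReal
open NormedSpace

section AuxPow

open Nat in
lemma aux_pow_sub_pow_norm_le {A : Type*} [NormedRing A] [NormOneClass A] (a b : A) {M : ℝ}
    (ha : ‖a‖ ≤ M) (hb : ‖b‖ ≤ M) (hM : 0 ≤ M) :
    ∀ n : ℕ, ‖a ^ n - b ^ n‖ ≤ n * M ^ (n - 1) * ‖a - b‖ := by
  intro n
  induction n with
  | zero => simp
  | succ n ih =>
    have key : a ^ (n + 1) - b ^ (n + 1) = a * (a ^ n - b ^ n) + (a - b) * b ^ n := by
      rw [pow_succ' a, pow_succ' b]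
      rw [show a * a ^ n - b * b ^ n = a * (a ^ n - b ^ n) + (a - b) * b ^ n by
        rw [mul_sub, sub_mul]; abel]
    have hbn : ‖b ^ n‖ ≤ M ^ n := (norm_pow_le b n).trans (by gcongr)
    rw [key, Nat.add_sub_cancel]
    calc ‖a * (a ^ n - b ^ n) + (a - b) * b ^ n‖
        ≤ ‖a‖ * ‖a ^ n - b ^ n‖ + ‖a - b‖ * ‖b ^ n‖ :=
          (norm_add_le _ _).trans (add_le_add (norm_mul_le _ _) (norm_mul_le _ _))
      _ ≤ M * (n * M ^ (n - 1) * ‖a - b‖) + ‖a - b‖ * M ^ n := by gcongr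
      _ ≤ (n + 1 : ℕ) * M ^ n * ‖a - b‖ := by
          cases n with
          | zero => simp
          | succ m =>
            rw [Nat.add_sub_cancel]
            have : M * (↑(m + 1) * M ^ m * ‖a - b‖) = (m + 1 : ℕ) * M ^ (m + 1) * ‖a - b‖ := by
              push_cast; ring
            rw [this]
            have h2 : ((m + 1 + 1 : ℕ) : ℝ) * M ^ (m + 1) * ‖a - b‖
                = ((m + 1 : ℕ) : ℝ) * M ^ (m + 1) * ‖a - b‖ + ‖a - b‖ * M ^ (m + 1) := by
              push_cast; ring
            rw [h2]

open Nat in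
lemma aux_exp_sub_exp_norm_le {A : Type*} [NormedRing A] [NormOneClass A] [NormedAlgebra ℂ A]
    [CompleteSpace A] (a b : A) {M : ℝ} (ha : ‖a‖ ≤ M) (hb : ‖b‖ ≤ M) (hM : 0 ≤ M) :
    ‖exp a - exp b‖ ≤ ‖a - b‖ * Real.exp M := by
  have hpow := aux_pow_sub_pow_norm_le a b ha hb hM
  have hsa : Summable fun n : ℕ => ((n ! : ℂ))⁻¹ • a ^ n := expSeries_summable' (𝕂 := ℂ) a
  have hsb : Summable fun n : ℕ => ((n ! : ℂ))⁻¹ • b ^ n := expSeries_summable' (𝕂 := ℂ) b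
  have hdiff : exp a - exp b = ∑' n : ℕ, ((n ! : ℂ))⁻¹ • (a ^ n - b ^ n) := by
    simp only [exp_eq_tsum ℂ]
    rw [← Summable.tsum_sub hsa hsb]
    congr 1; funext n; rw [smul_sub]
  set g : ℕ → ℝ := fun n => ‖a - b‖ * (n * ((n ! : ℝ))⁻¹ * M ^ (n - 1)) with hg
  have hgsum : HasSum g (‖a - b‖ * Real.exp M) := by
    have h1 : HasSum (fun n : ℕ => M ^ n / (n ! : ℝ)) (Real.exp M) := by
      rw [Real.exp_eq_exp_ℝ]
      exact expSeries_div_hasSum_exp M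
    have h2 : HasSum (fun n : ℕ => (n + 1 : ℕ) * (((n + 1)! : ℝ))⁻¹ * M ^ n) (Real.exp M) := by
      convert h1 using 2 with n
      rw [Nat.factorial_succ]
      push_cast
      rw [mul_inv]
      field_simp
    have h3 : HasSum (fun n : ℕ => (n : ℝ) * ((n ! : ℝ))⁻¹ * M ^ (n - 1)) (Real.exp M) := by
      refine (hasSum_nat_add_iff' (f := fun n : ℕ => (n : ℝ) * ((n ! : ℝ))⁻¹ * M ^ (n - 1)) 1).1 ?_
      simp only [Finset.range_one, Finset.sum_singleton, Nat.cast_zero, zero_mul,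
        sub_zero, Nat.add_sub_cancel]
      exact h2
    exact h3.mul_left _
  rw [hdiff]
  refine tsum_of_norm_bounded hgsum fun n => ?_
  rw [norm_smul, norm_inv]
  have : ‖((n ! : ℂ))‖ = (n ! : ℝ) := by rw [Complex.norm_natCast]
  rw [this, hg]
  calc ((n ! : ℝ))⁻¹ * ‖a ^ n - b ^ n‖ ≤ ((n ! : ℝ))⁻¹ * (n * M ^ (n - 1) * ‖a - b‖) :=
        mul_le_mul_of_nonneg_left (hpow n) (by positivity)
    _ = ‖a - b‖ * ((n : ℝ) * ((n ! : ℝ))⁻¹ * M ^ (n - 1)) := by ring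

lemma aux_inv_sub_inv {R : Type*} [Ring R] (u v : Rˣ) :
    (↑u⁻¹ : R) - ↑v⁻¹ = ↑u⁻¹ * ((↑v : R) - ↑u) * ↑v⁻¹ := by
  rw [mul_sub, sub_mul, mul_assoc, Units.mul_inv, mul_one, Units.inv_mul, one_mul]

end AuxPow

section AuxInverse

open ContinuousLinearMap in
lemma aux_one_add_exp_isUnit_and_inv_le {E : Type*} [NormedAddCommGroup E]
    [InnerProductSpace ℂ E] [CompleteSpace E] (T : E →L[ℂ] E) (hT : IsSelfAdjoint T) :
    IsUnit (1 + exp T) ∧ ‖Ring.inverse (1 + exp T)‖ ≤ 1 := by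
  set s : E →L[ℂ] E := exp ((1 / 2 : ℂ) • T) with hs_def
  have hhalf : IsSelfAdjoint ((1 / 2 : ℂ) • T) := by
    rw [IsSelfAdjoint, star_smul, hT.star_eq]
    norm_num
  have hs : IsSelfAdjoint s := hhalf.exp
  have hss : s * s = exp T := by
    have hball : ((1 / 2 : ℂ) • T) ∈ Metric.eball (0 : E →L[ℂ] E) (expSeries ℂ (E →L[ℂ] E)).radius :=
      (expSeries_radius_eq_top ℂ (E →L[ℂ] E)).symm ▸ edist_lt_top _ _
    rw [hs_def, ← exp_add_of_commute_of_mem_ball (𝕂 := ℂ) (Commute.refl _) hball hball, ← add_smul]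
    norm_num
  have key : ∀ x : E, ‖x‖ ^ 2 ≤ Complex.re (inner ℂ ((1 + exp T) x) x : ℂ) := by
    intro x
    have h1 : ((1 + exp T) x) = x + s (s x) := by
      rw [← hss]; simp [mul_apply]
    have h2 : (inner ℂ (s (s x)) x : ℂ) = inner ℂ (s x) (s x) := by
      nth_rewrite 1 [← hs.adjoint_eq]
      exact adjoint_inner_left s x (s x)
    rw [h1, inner_add_left, h2, inner_self_eq_norm_sq_to_K, inner_self_eq_norm_sq_to_K]
    simp only [← RCLike.ofReal_pow, ← RCLike.re_to_complex, ← RCLike.ofReal_add,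
      RCLike.ofReal_re]
    nlinarith [sq_nonneg ‖s x‖]
  have hb : ∀ x : E, ‖x‖ ≤ ‖(1 + exp T) x‖ := by
    intro x
    rcases eq_or_ne x 0 with rfl | hx
    · simp
    · have h0 : 0 < ‖x‖ := norm_pos_iff.2 hx
      have h2 : ‖x‖ ^ 2 ≤ ‖(1 + exp T) x‖ * ‖x‖ := by
        refine le_trans (key x) (le_trans (Complex.re_le_norm _) ?_)
        exact norm_inner_le_norm _ _
      rw [pow_two] at h2
      exact le_of_mul_le_mul_right (by linarith [h2]) h0
  have hunit : IsUnit (1 + exp T) := by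
    refine isUnit_of_forall_le_norm_inner_map _ (c := 1) one_pos fun x => ?_
    rw [NNReal.coe_one, mul_one]
    exact (key x).trans (Complex.re_le_norm _)
  refine ⟨hunit, ?_⟩
  obtain ⟨u, hu⟩ := hunit
  rw [← hu, Ring.inverse_unit]
  refine opNorm_le_bound _ zero_le_one fun y => ?_
  have h3 : (1 + exp T) ((↑u⁻¹ : E →L[ℂ] E) y) = y := by
    rw [← hu]
    have : (↑u : E →L[ℂ] E) ((↑u⁻¹ : E →L[ℂ] E) y) = ((↑u * ↑u⁻¹ : E →L[ℂ] E)) y := rfl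
    rw [this, ← Units.val_mul, mul_inv_cancel, Units.val_one, ContinuousLinearMap.one_apply]
  calc ‖(↑u⁻¹ : E →L[ℂ] E) y‖ ≤ ‖(1 + exp T) ((↑u⁻¹ : E →L[ℂ] E) y)‖ := hb _
    _ = 1 * ‖y‖ := by rw [h3, one_mul]

end AuxInverse

noncomputable section AuxShift

variable {I : Type*}

lemma aux_memℓp_comp_equiv (σ : I ≃ I) {f : I → ℂ} (hf : Memℓp f 2) :
    Memℓp (fun x => f (σ x)) 2 := by
  apply memℓp_gen
  exact (σ.summable_iff (f := fun i => ‖f i‖ ^ (2 : ℝ≥0∞).toReal)).2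
    (hf.summable (by norm_num))

/-- Composition with an equivalence of the index set, as a continuous linear map on `ℓ²`. -/
def shiftCLM (σ : I ≃ I) : lp (fun _ : I => ℂ) 2 →L[ℂ] lp (fun _ : I => ℂ) 2 :=
  LinearMap.mkContinuous
    { toFun := fun ψ => (⟨fun x => ψ (σ x), aux_memℓp_comp_equiv σ (lp.memℓp ψ)⟩ :
        lp (fun _ : I => ℂ) 2)
      map_add' := fun ψ φ => by
        apply lp.ext
        funext x
        simp [lp.coeFn_add, Pi.add_apply]
        rfl
      map_smul' := fun c ψ => by
        apply lp.ext
        funext x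
        simp [lp.coeFn_smul] }
    1
    (fun ψ => by
      rw [one_mul]
      apply le_of_eq
      have hp : 0 < (2 : ℝ≥0∞).toReal := by norm_num
      rw [lp.norm_eq_tsum_rpow hp, lp.norm_eq_tsum_rpow hp]
      congr 1
      exact σ.tsum_eq (f := fun i => ‖ψ i‖ ^ (2 : ℝ≥0∞).toReal))

@[simp] lemma shiftCLM_apply (σ : I ≃ I) (ψ : lp (fun _ : I => ℂ) 2) (x : I) :
    (shiftCLM σ ψ) x = ψ (σ x) := rfl

lemma shiftCLM_norm_le (σ : I ≃ I) : ‖shiftCLM σ‖ ≤ 1 :=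
  LinearMap.mkContinuous_norm_le _ zero_le_one _

lemma shiftCLM_adjoint (σ : I ≃ I) :
    ContinuousLinearMap.adjoint (shiftCLM (I := I) σ) = shiftCLM σ.symm := by
  symm
  rw [ContinuousLinearMap.eq_adjoint_iff]
  intro ψ φ
  rw [lp.inner_eq_tsum, lp.inner_eq_tsum]
  simp only [shiftCLM_apply, RCLike.inner_apply]
  have := σ.tsum_eq (f := fun y => (φ y) * (starRingEnd ℂ) (ψ (σ.symm y)))
  simp only [Equiv.symm_apply_apply] at this
  exact this.symm

end AuxShift

set_option maxHeartbeats 1000000 in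
/-- The Fermi symbol of the Anderson tight-binding model is close in operator norm
to that of the free Laplacian, uniformly in the disorder realization `ω`:
`‖(1+e^{β(Δ_d+λV_ω)})⁻¹ − (1+e^{βΔ_d})⁻¹‖ ≤ βλ e^{β(4d+λ)}`. -/
theorem anderson_fermi_symbol_small_disorder (d : ℕ) (hd : 1 ≤ d) (β lam : ℝ)
    (hβ : 0 < β) (hlam : 0 ≤ lam) (ω : (Fin d → ℤ) → ℝ)
    (hω : ∀ x : Fin d → ℤ, ω x ∈ Set.Icc (-1 : ℝ) 1)
    (L V : lp (fun _ : Fin d → ℤ => ℂ) 2 →L[ℂ] lp (fun _ : Fin d → ℤ => ℂ) 2)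
    (hL : ∀ (ψ : lp (fun _ : Fin d → ℤ => ℂ) 2) (x : Fin d → ℤ),
      (L ψ) x = 2 * (d : ℂ) * ψ x
        - ∑ i : Fin d, (ψ (x + Pi.single i 1) + ψ (x - Pi.single i 1)))
    (hV : ∀ (ψ : lp (fun _ : Fin d → ℤ => ℂ) 2) (x : Fin d → ℤ),
      (V ψ) x = (ω x : ℂ) * ψ x) :
    ‖Ring.inverse (1 + NormedSpace.exp (β • (L + lam • V)))
        - Ring.inverse (1 + NormedSpace.exp (β • L))‖
      ≤ β * lam * Real.exp (β * (4 * d + lam)) := by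
  have hp2 : 0 < (2 : ℝ≥0∞).toReal := by norm_num
  haveI : Nontrivial (lp (fun _ : Fin d → ℤ => ℂ) 2) := by
    refine ⟨⟨lp.single 2 (0 : Fin d → ℤ) (1 : ℂ), 0, fun h => ?_⟩⟩
    have h1 : (lp.single (E := fun _ : Fin d → ℤ => ℂ) 2 (0 : Fin d → ℤ) (1 : ℂ))
        (0 : Fin d → ℤ) = 1 := lp.single_apply_self _ _ _
    rw [h, lp.coeFn_zero, Pi.zero_apply] at h1
    exact one_ne_zero h1.symm
  -- norm bound on V
  have hVnorm : ‖V‖ ≤ 1 := by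
    refine ContinuousLinearMap.opNorm_le_bound V zero_le_one fun ψ => ?_
    rw [one_mul]
    refine lp.norm_le_of_tsum_le hp2 (norm_nonneg ψ) ?_
    have h1 : ∀ x, ‖(V ψ) x‖ ^ (2 : ℝ≥0∞).toReal ≤ ‖ψ x‖ ^ (2 : ℝ≥0∞).toReal := by
      intro x
      refine Real.rpow_le_rpow (norm_nonneg _) ?_ (by norm_num)
      rw [hV, norm_mul]
      have hωx : ‖((ω x : ℝ) : ℂ)‖ ≤ 1 := by
        rw [Complex.norm_real, Real.norm_eq_abs, abs_le]
        exact ⟨(hω x).1, (hω x).2⟩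
      calc ‖((ω x : ℝ) : ℂ)‖ * ‖ψ x‖ ≤ 1 * ‖ψ x‖ := by gcongr
        _ = ‖ψ x‖ := one_mul _
    calc ∑' x, ‖(V ψ) x‖ ^ (2 : ℝ≥0∞).toReal
        ≤ ∑' x, ‖ψ x‖ ^ (2 : ℝ≥0∞).toReal :=
          Summable.tsum_le_tsum h1 ((lp.memℓp (V ψ)).summable hp2) ((lp.memℓp ψ).summable hp2)
      _ = ‖ψ‖ ^ (2 : ℝ≥0∞).toReal := (lp.norm_rpow_eq_tsum hp2 ψ).symm
  -- self-adjointness of V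
  have hVsa : IsSelfAdjoint V := by
    rw [ContinuousLinearMap.isSelfAdjoint_iff_isSymmetric]
    intro ψ φ
    simp only [ContinuousLinearMap.coe_coe]
    rw [lp.inner_eq_tsum, lp.inner_eq_tsum]
    refine tsum_congr fun x => ?_
    simp only [RCLike.inner_apply]
    rw [hV ψ x, hV φ x, map_mul, Complex.conj_ofReal]
    ring
  -- representation of L via shifts
  set σ : Fin d → ((Fin d → ℤ) ≃ (Fin d → ℤ)) := fun i => Equiv.addRight (Pi.single i 1)
    with hσ
  have hLrep : L = (2 * (d : ℂ)) • (1 : lp (fun _ : Fin d → ℤ => ℂ) 2 →L[ℂ] lp (fun _ : Fin d → ℤ => ℂ) 2)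
      - ∑ i : Fin d, (shiftCLM (σ i) + shiftCLM (σ i).symm) := by
    refine ContinuousLinearMap.ext fun ψ => ?_
    apply lp.ext
    funext x
    have hx := hL ψ x
    have hσs : ∀ i : Fin d, (σ i).symm x = x - Pi.single i 1 := by
      intro i
      simp [hσ, Equiv.addRight_symm]
      rw [sub_eq_add_neg]
    simp only [ContinuousLinearMap.sub_apply, ContinuousLinearMap.smul_apply,
      ContinuousLinearMap.one_apply, ContinuousLinearMap.sum_apply,
      ContinuousLinearMap.add_apply, lp.coeFn_sub, Pi.sub_apply, lp.coeFn_smul,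
      Pi.smul_apply, lp.coeFn_sum, Finset.sum_apply, lp.coeFn_add, Pi.add_apply,
      shiftCLM_apply]
    rw [hx]
    have hσa : ∀ i : Fin d, (σ i) x = x + Pi.single i 1 := fun i => rfl
    simp only [hσa, hσs, smul_eq_mul]
  -- norm bound on L
  have hLnorm : ‖L‖ ≤ 4 * d := by
    rw [hLrep]
    have h2d : ‖(2 * (d : ℂ))‖ = 2 * (d : ℝ) := by
      rw [norm_mul, Complex.norm_natCast]
      norm_num
    have h1 : ‖(2 * (d : ℂ)) • (1 : lp (fun _ : Fin d → ℤ => ℂ) 2 →L[ℂ] lp (fun _ : Fin d → ℤ => ℂ) 2)‖ ≤ 2 * d := by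
      refine (ContinuousLinearMap.opNorm_smul_le _ _).trans ?_
      rw [h2d, norm_one, mul_one]
    have h2 : ‖∑ i : Fin d, (shiftCLM (σ i) + shiftCLM (σ i).symm)‖ ≤ 2 * d := by
      refine (norm_sum_le _ _).trans ?_
      have : ∀ i : Fin d, ‖shiftCLM (σ i) + shiftCLM (σ i).symm‖ ≤ 2 := fun i =>
        (norm_add_le _ _).trans (by linarith [shiftCLM_norm_le (σ i), shiftCLM_norm_le (σ i).symm])
      calc ∑ i : Fin d, ‖shiftCLM (σ i) + shiftCLM (σ i).symm‖ ≤ ∑ _i : Fin d, (2 : ℝ) :=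
            Finset.sum_le_sum fun i _ => this i
        _ = 2 * d := by simp [mul_comm]
    calc ‖(2 * (d : ℂ)) • (1 : lp (fun _ : Fin d → ℤ => ℂ) 2 →L[ℂ] lp (fun _ : Fin d → ℤ => ℂ) 2) - ∑ i : Fin d, (shiftCLM (σ i) + shiftCLM (σ i).symm)‖
        ≤ ‖(2 * (d : ℂ)) • (1 : lp (fun _ : Fin d → ℤ => ℂ) 2 →L[ℂ] lp (fun _ : Fin d → ℤ => ℂ) 2)‖ + ‖∑ i : Fin d, (shiftCLM (σ i) + shiftCLM (σ i).symm)‖ :=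
          norm_sub_le _ _
      _ ≤ 2 * d + 2 * d := add_le_add h1 h2
      _ = 4 * d := by ring
  -- self-adjointness of L
  have hLsa : IsSelfAdjoint L := by
    rw [hLrep, IsSelfAdjoint, star_sub, star_smul, star_one, star_sum]
    have hstar : ∀ i : Fin d, star (shiftCLM (σ i) + shiftCLM (σ i).symm)
        = shiftCLM (σ i) + shiftCLM (σ i).symm := by
      intro i
      rw [star_add, ContinuousLinearMap.star_eq_adjoint, ContinuousLinearMap.star_eq_adjoint,
        shiftCLM_adjoint, shiftCLM_adjoint, Equiv.symm_symm]
      rw [add_comm]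
    have hc : star (2 * (d : ℂ)) = 2 * (d : ℂ) := by
      simp [Complex.star_def, map_mul]
    rw [hc]
    congr 1
    exact Finset.sum_congr rfl fun i _ => hstar i
  -- the two operators
  set A := β • L with hA
  set B := β • (L + lam • V) with hB
  have hcoe : ∀ (r : ℝ) (T : lp (fun _ : Fin d → ℤ => ℂ) 2 →L[ℂ] lp (fun _ : Fin d → ℤ => ℂ) 2),
      r • T = (r : ℂ) • T := fun r T =>
    RCLike.real_smul_eq_coe_smul (K := ℂ) r T
  have hAsa : IsSelfAdjoint A := by
    rw [hA, hcoe, IsSelfAdjoint, star_smul, hLsa.star_eq, Complex.star_def, Complex.conj_ofReal]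
  have hBsa : IsSelfAdjoint B := by
    have hsum : IsSelfAdjoint (L + lam • V) := by
      refine hLsa.add ?_
      rw [hcoe, IsSelfAdjoint, star_smul, hVsa.star_eq, Complex.star_def, Complex.conj_ofReal]
    rw [hB, hcoe, IsSelfAdjoint, star_smul, hsum.star_eq, Complex.star_def, Complex.conj_ofReal]
  set M : ℝ := β * (4 * d + lam) with hM
  have hMnn : 0 ≤ M := by positivity
  have hnormA : ‖A‖ ≤ M := by
    rw [hA]
    refine (ContinuousLinearMap.opNorm_smul_le _ _).trans ?_
    rw [Real.norm_eq_abs, abs_of_pos hβ]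
    calc β * ‖L‖ ≤ β * (4 * d + lam) := by
          have : ‖L‖ ≤ 4 * d + lam := hLnorm.trans (by linarith)
          gcongr
      _ = M := rfl
  have hlamV : ‖lam • V‖ ≤ lam := by
    refine (ContinuousLinearMap.opNorm_smul_le _ _).trans ?_
    rw [Real.norm_eq_abs, abs_of_nonneg hlam]
    calc lam * ‖V‖ ≤ lam * 1 := by gcongr
      _ = lam := mul_one _
  have hnormB : ‖B‖ ≤ M := by
    rw [hB]
    refine (ContinuousLinearMap.opNorm_smul_le _ _).trans ?_
    rw [Real.norm_eq_abs, abs_of_pos hβ]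
    have h1 : ‖L + lam • V‖ ≤ 4 * d + lam := by
      refine (norm_add_le _ _).trans ?_
      linarith [hLnorm]
    calc β * ‖L + lam • V‖ ≤ β * (4 * d + lam) := by gcongr
      _ = M := rfl
  have hdiffnorm : ‖B - A‖ ≤ β * lam := by
    have : B - A = β • (lam • V) := by
      rw [hB, hA, ← smul_sub]
      congr 1
      rw [add_sub_cancel_left]
    rw [this]
    refine (ContinuousLinearMap.opNorm_smul_le _ _).trans ?_
    rw [Real.norm_eq_abs, abs_of_pos hβ]
    calc β * ‖lam • V‖ ≤ β * lam := by gcongr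
      _ = β * lam := rfl
  -- exponential difference bound
  have hexp : ‖NormedSpace.exp B - NormedSpace.exp A‖ ≤ β * lam * Real.exp M := by
    refine (aux_exp_sub_exp_norm_le B A hnormB hnormA hMnn).trans ?_
    calc ‖B - A‖ * Real.exp M ≤ (β * lam) * Real.exp M := by
          gcongr
      _ = β * lam * Real.exp M := rfl
  -- the inverses
  obtain ⟨huB, hinvB⟩ := aux_one_add_exp_isUnit_and_inv_le B hBsa
  obtain ⟨huA, hinvA⟩ := aux_one_add_exp_isUnit_and_inv_le A hAsa
  obtain ⟨uB, huB'⟩ := huB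
  obtain ⟨uA, huA'⟩ := huA
  have hkey : Ring.inverse (1 + NormedSpace.exp B) - Ring.inverse (1 + NormedSpace.exp A)
      = Ring.inverse (1 + NormedSpace.exp B)
        * ((1 + NormedSpace.exp A) - (1 + NormedSpace.exp B))
        * Ring.inverse (1 + NormedSpace.exp A) := by
    rw [← huB', ← huA', Ring.inverse_unit, Ring.inverse_unit]
    exact aux_inv_sub_inv uB uA
  rw [hkey]
  have hmid : ‖(1 + NormedSpace.exp A) - (1 + NormedSpace.exp B)‖ ≤ β * lam * Real.exp M := by
    rw [show (1 + NormedSpace.exp A) - (1 + NormedSpace.exp B)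
      = NormedSpace.exp A - NormedSpace.exp B by abel]
    rw [norm_sub_rev]
    exact hexp
  calc ‖Ring.inverse (1 + NormedSpace.exp B)
        * ((1 + NormedSpace.exp A) - (1 + NormedSpace.exp B))
        * Ring.inverse (1 + NormedSpace.exp A)‖
      ≤ ‖Ring.inverse (1 + NormedSpace.exp B)
          * ((1 + NormedSpace.exp A) - (1 + NormedSpace.exp B))‖
        * ‖Ring.inverse (1 + NormedSpace.exp A)‖ := norm_mul_le _ _
    _ ≤ ‖Ring.inverse (1 + NormedSpace.exp B)‖
        * ‖(1 + NormedSpace.exp A) - (1 + NormedSpace.exp B)‖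
        * ‖Ring.inverse (1 + NormedSpace.exp A)‖ := by
          gcongr
          exact norm_mul_le _ _
    _ ≤ 1 * (β * lam * Real.exp M) * 1 := by
          have hM0 : (0:ℝ) ≤ 1 * (β * lam * Real.exp M) := by positivity
          exact mul_le_mul
            (mul_le_mul hinvB hmid (norm_nonneg _) zero_le_one)
            hinvA (norm_nonneg _) hM0
    _ = β * lam * Real.exp (β * (4 * d + lam)) := by rw [one_mul, mul_one, hM]
end

section
/- Let H₀ and W be bounded self-adjoint operators on a complex Hilbert space, let t ≥ 0 and N ≥ 1. Define the N-th Dyson approximant S_N(t) := e^{−itH₀} + Σ_{n=1}^{N−1} (−i)^n ∫_0^t dt₁ ∫_0^{t₁} dt₂ ⋯ ∫_0^{t_{n−1}} dt_n e^{−i(t−t₁)H₀} W e^{−i(t₁−t₂)H₀} W ⋯ W e^{−it_n H₀}. Then ‖e^{−it(H₀+W)} − S_N(t)‖_op ≤ (t‖W‖_op)^N / N!. In particular, S_N(t) converges in operator norm to e^{−it(H₀+W)} as N → ∞, uniformly for t in compact sets and uniformly in H₀ ranging over self-adjoint operators. -/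
open MeasureTheory intervalIntegral

section Aux

variable {H : Type*} [NormedAddCommGroup H] [InnerProductSpace ℂ H] [CompleteSpace H]

lemma dyson_exp_mem_unitary {A : H →L[ℂ] H} (hA : IsSelfAdjoint A) (r : ℝ) :
    NormedSpace.exp ((-Complex.I * (r : ℂ)) • A) ∈ unitary (H →L[ℂ] H) := by
  let +nondep : NormedAlgebra ℚ (H →L[ℂ] H) := .restrictScalars ℚ ℂ _
  apply NormedSpace.exp_mem_unitary_of_mem_skewAdjoint
  rw [skewAdjoint.mem_iff, star_smul, hA.star_eq]
  simp [Complex.star_def, map_mul, Complex.conj_I, neg_smul, neg_mul]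

lemma dyson_exp_norm_le {A : H →L[ℂ] H} (hA : IsSelfAdjoint A) (r : ℝ) :
    ‖NormedSpace.exp ((-Complex.I * (r : ℂ)) • A)‖ ≤ 1 := by
  rcases subsingleton_or_nontrivial H with h | h
  · have : Subsingleton (H →L[ℂ] H) := by infer_instance
    simp [Subsingleton.elim (NormedSpace.exp ((-Complex.I * (r : ℂ)) • A)) 0]
  · exact le_of_eq (CStarRing.norm_of_mem_unitary (dyson_exp_mem_unitary hA r))

lemma dyson_cont_exp (A : H →L[ℂ] H) :
    Continuous fun r : ℝ => NormedSpace.exp ((-Complex.I * (r : ℂ)) • A) := by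
  let +nondep : NormedAlgebra ℚ (H →L[ℂ] H) := .restrictScalars ℚ ℂ _
  exact NormedSpace.exp_continuous.comp
    ((continuous_const.mul Complex.continuous_ofReal).smul continuous_const)

/-- Duhamel's formula. -/
lemma dyson_duhamel (A B : H →L[ℂ] H) (t : ℝ) :
    NormedSpace.exp ((-Complex.I * (t : ℂ)) • (A + B))
      - NormedSpace.exp ((-Complex.I * (t : ℂ)) • A)
    = ∫ s in (0:ℝ)..t, (-Complex.I) •
        (NormedSpace.exp ((-Complex.I * ((t - s : ℝ) : ℂ)) • A) *
          (B * NormedSpace.exp ((-Complex.I * (s : ℂ)) • (A + B)))) := by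
  let +nondep : NormedAlgebra ℚ (H →L[ℂ] H) := .restrictScalars ℚ ℂ _
  set F : ℝ → (H →L[ℂ] H) := fun s =>
    NormedSpace.exp ((-Complex.I * ((t - s : ℝ) : ℂ)) • A) *
      NormedSpace.exp ((-Complex.I * (s : ℂ)) • (A + B)) with hF
  have key : ∀ s : ℝ, HasDerivAt F
      ((-Complex.I) • (NormedSpace.exp ((-Complex.I * ((t - s : ℝ) : ℂ)) • A) *
        (B * NormedSpace.exp ((-Complex.I * (s : ℂ)) • (A + B))))) s := by
    intro s
    have hin1 : HasDerivAt (fun s : ℝ => (-Complex.I * ((t - s : ℝ) : ℂ)))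
        Complex.I s := by
      have : (fun s : ℝ => (-Complex.I * ((t - s : ℝ) : ℂ)))
          = fun s : ℝ => (-Complex.I * (t : ℂ)) + s • Complex.I := by
        funext s; push_cast; simp [Complex.real_smul]; ring
      rw [this]
      exact ((hasDerivAt_const s (-Complex.I * (t : ℂ))).add
        ((hasDerivAt_id s).smul_const Complex.I)).congr_deriv (by simp)
    have hin2 : HasDerivAt (fun s : ℝ => (-Complex.I * (s : ℂ))) (-Complex.I) s := by
      have : (fun s : ℝ => (-Complex.I * (s : ℂ))) = fun s : ℝ => s • (-Complex.I) := by
        funext s; simp [Complex.real_smul]; ring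
      rw [this]
      simpa using (hasDerivAt_id s).smul_const (-Complex.I)
    have h1 : HasDerivAt (fun s : ℝ => NormedSpace.exp ((-Complex.I * ((t - s : ℝ) : ℂ)) • A))
        (Complex.I • (NormedSpace.exp ((-Complex.I * ((t - s : ℝ) : ℂ)) • A) * A)) s := by
      have := (hasDerivAt_exp_smul_const (𝕂 := ℂ) A
        ((-Complex.I * ((t - s : ℝ) : ℂ)))).scomp s hin1
      exact this
    have h2 : HasDerivAt (fun s : ℝ => NormedSpace.exp ((-Complex.I * (s : ℂ)) • (A + B)))
        ((-Complex.I) • ((A + B) * NormedSpace.exp ((-Complex.I * (s : ℂ)) • (A + B)))) s := by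
      have := (hasDerivAt_exp_smul_const' (𝕂 := ℂ) (A + B)
        ((-Complex.I * (s : ℂ)))).scomp s hin2
      exact this
    have := h1.mul h2
    refine this.congr_deriv ?_
    set e₁ := NormedSpace.exp ((-Complex.I * ((t - s : ℝ) : ℂ)) • A)
    set e₂ := NormedSpace.exp ((-Complex.I * (s : ℂ)) • (A + B))
    rw [smul_mul_assoc, mul_smul_comm, add_mul, mul_add, smul_add, mul_assoc]
    simp only [neg_smul]
    abel
  have hcont : Continuous fun s : ℝ => (-Complex.I) •
      (NormedSpace.exp ((-Complex.I * ((t - s : ℝ) : ℂ)) • A) *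
        (B * NormedSpace.exp ((-Complex.I * (s : ℂ)) • (A + B)))) := by
    apply Continuous.fun_const_smul
    exact ((dyson_cont_exp A).comp (continuous_const.sub continuous_id)).mul
      (continuous_const.mul (dyson_cont_exp (A + B)))
  have := intervalIntegral.integral_eq_sub_of_hasDerivAt
    (fun s _ => key s) (hcont.intervalIntegrable 0 t)
  rw [this, hF]
  simp [NormedSpace.exp_zero]

end Aux

/-- Convergence of the Dyson series: if `T n t` denotes the `n`-th term of the Dyson
expansion (defined through its standard recursion, so that
`T n t = (−i)^n ∫_0^t dt₁ ⋯ ∫_0^{t_{n−1}} dt_n  e^{−i(t−t₁)H₀} W ⋯ W e^{−i t_n H₀}`),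
then the `N`-th Dyson approximant `S_N(t) = Σ_{n<N} T n t` satisfies
`‖e^{−it(H₀+W)} − S_N(t)‖ ≤ (t‖W‖)^N / N!`. -/
theorem dyson_series_bound {H : Type*} [NormedAddCommGroup H] [InnerProductSpace ℂ H]
    [CompleteSpace H] (H₀ W : H →L[ℂ] H) (hH₀ : IsSelfAdjoint H₀) (hW : IsSelfAdjoint W)
    (T : ℕ → ℝ → (H →L[ℂ] H))
    (hT0 : ∀ t : ℝ, T 0 t = NormedSpace.exp ((-Complex.I * (t : ℂ)) • H₀))
    (hTrec : ∀ (n : ℕ) (t : ℝ),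
      T (n + 1) t = ∫ s in (0 : ℝ)..t,
        (-Complex.I) • (NormedSpace.exp ((-Complex.I * ((t - s : ℝ) : ℂ)) • H₀) * (W * T n s)))
    (t : ℝ) (ht : 0 ≤ t) (N : ℕ) (hN : 1 ≤ N) :
    ‖NormedSpace.exp ((-Complex.I * (t : ℂ)) • (H₀ + W)) - ∑ n ∈ Finset.range N, T n t‖
      ≤ (t * ‖W‖) ^ N / N.factorial := by
  have hHW : IsSelfAdjoint (H₀ + W) := hH₀.add hW
  set U : ℝ → (H →L[ℂ] H) := fun s => NormedSpace.exp ((-Complex.I * (s : ℂ)) • (H₀ + W))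
    with hU
  have hUcont : Continuous U := dyson_cont_exp (H₀ + W)
  -- continuity of the terms T n
  have hTcont : ∀ n, Continuous (T n) := by
    intro n
    induction n with
    | zero =>
      have : T 0 = fun t : ℝ => NormedSpace.exp ((-Complex.I * (t : ℂ)) • H₀) := funext hT0
      rw [this]; exact dyson_cont_exp H₀
    | succ n ih =>
      have : T (n + 1) = fun t => ∫ s in (0 : ℝ)..t,
          (-Complex.I) • (NormedSpace.exp ((-Complex.I * ((t - s : ℝ) : ℂ)) • H₀)
            * (W * T n s)) := funext (hTrec n)
      rw [this]
      apply intervalIntegral.continuous_parametric_intervalIntegral_of_continuous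
        (f := fun (t : ℝ) (s : ℝ) => (-Complex.I) •
          (NormedSpace.exp ((-Complex.I * ((t - s : ℝ) : ℂ)) • H₀) * (W * T n s)))
        _ continuous_id
      apply Continuous.fun_const_smul
      exact (((dyson_cont_exp H₀).comp (continuous_fst.sub continuous_snd)).mul
        (continuous_const.mul (ih.comp continuous_snd)))
  -- key recursion for the remainder
  have hrec : ∀ (N : ℕ) (t : ℝ),
      U t - ∑ n ∈ Finset.range (N + 1), T n t
        = ∫ s in (0:ℝ)..t, (-Complex.I) •
            (NormedSpace.exp ((-Complex.I * ((t - s : ℝ) : ℂ)) • H₀) *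
              (W * (U s - ∑ n ∈ Finset.range N, T n s))) := by
    intro N
    induction N with
    | zero =>
      intro t
      simp only [zero_add, Finset.range_one, Finset.sum_singleton, hT0, Finset.range_zero,
        Finset.sum_empty, sub_zero]
      exact dyson_duhamel H₀ W t
    | succ N ih =>
      intro t
      have hint1 : IntervalIntegrable (fun s => (-Complex.I) •
          (NormedSpace.exp ((-Complex.I * ((t - s : ℝ) : ℂ)) • H₀) *
            (W * (U s - ∑ n ∈ Finset.range N, T n s)))) volume 0 t := by
        apply Continuous.intervalIntegrable
        apply Continuous.fun_const_smul
        exact (((dyson_cont_exp H₀).comp (continuous_const.sub continuous_id)).mul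
          (continuous_const.mul (hUcont.sub (by fun_prop (disch := exact fun i _ => hTcont i)))))
      have hint2 : IntervalIntegrable (fun s => (-Complex.I) •
          (NormedSpace.exp ((-Complex.I * ((t - s : ℝ) : ℂ)) • H₀) * (W * T N s)))
          volume 0 t := by
        apply Continuous.intervalIntegrable
        apply Continuous.fun_const_smul
        exact (((dyson_cont_exp H₀).comp (continuous_const.sub continuous_id)).mul
          (continuous_const.mul (hTcont N)))
      have step : U t - ∑ n ∈ Finset.range (N + 1 + 1), T n t
          = (U t - ∑ n ∈ Finset.range (N + 1), T n t) - T (N + 1) t := by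
        rw [Finset.sum_range_succ]; abel
      rw [step, ih t, hTrec N t, ← intervalIntegral.integral_sub hint1 hint2]
      congr 1
      funext s
      rw [Finset.sum_range_succ]
      simp only [← smul_sub, ← mul_sub, sub_sub]
  -- norm bound by induction
  have hbound : ∀ (N : ℕ) (t : ℝ), 0 ≤ t →
      ‖U t - ∑ n ∈ Finset.range N, T n t‖ ≤ ‖W‖ ^ N * t ^ N / N.factorial := by
    intro N
    induction N with
    | zero =>
      intro t ht
      simp only [Finset.range_zero, Finset.sum_empty, sub_zero, pow_zero, Nat.factorial_zero,
        Nat.cast_one, one_mul, div_one]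
      exact dyson_exp_norm_le hHW t
    | succ N ih =>
      intro t ht
      rw [hrec N t]
      have hRcont : Continuous fun s => U s - ∑ n ∈ Finset.range N, T n s :=
        hUcont.sub (by fun_prop (disch := exact fun i _ => hTcont i))
      calc ‖∫ s in (0:ℝ)..t, (-Complex.I) •
            (NormedSpace.exp ((-Complex.I * ((t - s : ℝ) : ℂ)) • H₀) *
              (W * (U s - ∑ n ∈ Finset.range N, T n s)))‖
          ≤ ∫ s in (0:ℝ)..t, ‖(-Complex.I) •
            (NormedSpace.exp ((-Complex.I * ((t - s : ℝ) : ℂ)) • H₀) *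
              (W * (U s - ∑ n ∈ Finset.range N, T n s)))‖ :=
            intervalIntegral.norm_integral_le_integral_norm ht
        _ ≤ ∫ s in (0:ℝ)..t, ‖W‖ ^ (N + 1) * s ^ N / N.factorial := by
            apply intervalIntegral.integral_mono_on ht
            · apply Continuous.intervalIntegrable
              apply Continuous.norm
              apply Continuous.fun_const_smul
              exact (((dyson_cont_exp H₀).comp (continuous_const.sub continuous_id)).mul
                (continuous_const.mul hRcont))
            · apply Continuous.intervalIntegrable; fun_prop
            · intro s hs
              have h1 : ‖(-Complex.I) •
                  (NormedSpace.exp ((-Complex.I * ((t - s : ℝ) : ℂ)) • H₀) *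
                    (W * (U s - ∑ n ∈ Finset.range N, T n s)))‖
                  = ‖NormedSpace.exp ((-Complex.I * ((t - s : ℝ) : ℂ)) • H₀) *
                    (W * (U s - ∑ n ∈ Finset.range N, T n s))‖ := by
                rw [norm_smul]; simp
              rw [h1, CStarRing.norm_mem_unitary_mul _ (dyson_exp_mem_unitary hH₀ (t - s))]
              calc ‖W * (U s - ∑ n ∈ Finset.range N, T n s)‖
                  ≤ ‖W‖ * ‖U s - ∑ n ∈ Finset.range N, T n s‖ := norm_mul_le _ _
                _ ≤ ‖W‖ * (‖W‖ ^ N * s ^ N / N.factorial) := by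
                    apply mul_le_mul_of_nonneg_left (ih s hs.1) (norm_nonneg _)
                _ = ‖W‖ ^ (N + 1) * s ^ N / N.factorial := by ring
        _ = ‖W‖ ^ (N + 1) * t ^ (N + 1) / (N + 1).factorial := by
            rw [intervalIntegral.integral_div, intervalIntegral.integral_const_mul,
              integral_pow]
            rw [Nat.factorial_succ]
            have h1 : ((N:ℝ) + 1) ≠ 0 := by positivity
            have h2 : (N.factorial : ℝ) ≠ 0 := by positivity
            push_cast
            field_simp
            simp
  have := hbound N t ht
  calc ‖U t - ∑ n ∈ Finset.range N, T n t‖ ≤ ‖W‖ ^ N * t ^ N / N.factorial := this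
    _ = (t * ‖W‖) ^ N / N.factorial := by rw [mul_pow]; ring
end

section
/- Let μ be a finite positive Borel measure on ℝ with μ(ℝ ∖ {0}) > 0. Then the set Z := {φ ∈ 𝒮(ℝ;ℝ) : ∫_{ℝ∖{0}} |φ̂(ν)|² dμ(ν) = 0} is meager in the Fréchet space 𝒮(ℝ;ℝ) of real-valued Schwartz functions equipped with its usual locally convex topology, where φ̂(ν) = ∫_ℝ e^{−iνs} φ(s) ds. (Non-vanishing of the AC-conductivity measure implies strictly positive heat production for all electric field pulses outside a meager set.) -/
open MeasureTheory Polynomial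

noncomputable section

lemma pow_mul_gauss_le (j : ℕ) (x : ℝ) :
    |x| ^ j * Real.exp (-(x ^ 2 / 2)) ≤ 2 ^ j * j.factorial := by
  have hfac : (1 : ℝ) ≤ 2 ^ j * j.factorial := by
    have h1 : (1 : ℝ) ≤ 2 ^ j := one_le_pow₀ one_le_two
    have h2 : (1 : ℝ) ≤ j.factorial := by exact_mod_cast j.factorial_pos
    nlinarith
  rcases le_total (|x|) 1 with h | h
  · calc |x| ^ j * Real.exp (-(x ^ 2 / 2)) ≤ 1 ^ j * 1 := by
          apply mul_le_mul (pow_le_pow_left₀ (abs_nonneg x) h j)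
            (Real.exp_le_one_iff.mpr (by nlinarith [sq_nonneg x])) (Real.exp_pos _).le (by norm_num)
      _ ≤ 2 ^ j * j.factorial := by simpa using hfac
  · have hx : x ≠ 0 := by intro h0; rw [h0] at h; simp at h; linarith
    have ha : (1 : ℝ) ≤ |x| ^ j := one_le_pow₀ h
    have hb : Real.exp (-(x ^ 2 / 2)) ≤ j.factorial * 2 ^ j / (x ^ 2) ^ j := by
      have h1 : (x ^ 2 / 2) ^ j / j.factorial ≤ Real.exp (x ^ 2 / 2) :=
        Real.pow_div_factorial_le_exp (x := x ^ 2 / 2) (by positivity) j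
      rw [Real.exp_neg]
      have hpos : (0 : ℝ) < (x ^ 2 / 2) ^ j / j.factorial := by
        have := Nat.factorial_pos j
        positivity
      have := (inv_anti₀ hpos h1)
      calc (Real.exp (x ^ 2 / 2))⁻¹ ≤ ((x ^ 2 / 2) ^ j / j.factorial)⁻¹ := this
        _ = j.factorial * 2 ^ j / (x ^ 2) ^ j := by
            rw [div_pow]
            field_simp
    have hkey : (x ^ 2) ^ j = (|x| ^ j) ^ 2 := by rw [← sq_abs x]; ring
    calc |x| ^ j * Real.exp (-(x ^ 2 / 2))
        ≤ |x| ^ j * (j.factorial * 2 ^ j / (x ^ 2) ^ j) := by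
          exact mul_le_mul_of_nonneg_left hb (by positivity)
      _ = (j.factorial * 2 ^ j) / |x| ^ j := by
          rw [hkey]
          have : |x| ^ j ≠ 0 := by positivity
          field_simp
      _ ≤ j.factorial * 2 ^ j := div_le_self (by positivity) ha
      _ = 2 ^ j * j.factorial := mul_comm _ _

lemma poly_gauss_bound (p : Polynomial ℝ) (k : ℕ) :
    ∃ C : ℝ, ∀ x : ℝ, |x| ^ k * (|Polynomial.eval x p| * Real.exp (-(x ^ 2 / 2))) ≤ C := by
  induction p using Polynomial.induction_on' with
  | add p q hp hq =>
      obtain ⟨C1, h1⟩ := hp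
      obtain ⟨C2, h2⟩ := hq
      refine ⟨C1 + C2, fun x => ?_⟩
      calc |x| ^ k * (|Polynomial.eval x (p + q)| * Real.exp (-(x ^ 2 / 2)))
          ≤ |x| ^ k * ((|Polynomial.eval x p| + |Polynomial.eval x q|) * Real.exp (-(x ^ 2 / 2))) := by
            rw [Polynomial.eval_add]
            gcongr
            exact abs_add_le _ _
        _ = |x| ^ k * (|Polynomial.eval x p| * Real.exp (-(x ^ 2 / 2)))
            + |x| ^ k * (|Polynomial.eval x q| * Real.exp (-(x ^ 2 / 2))) := by ring
        _ ≤ C1 + C2 := add_le_add (h1 x) (h2 x)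
  | monomial n a =>
      refine ⟨|a| * (2 ^ (k + n) * (k + n).factorial), fun x => ?_⟩
      rw [Polynomial.eval_monomial, abs_mul, abs_pow]
      calc |x| ^ k * (|a| * |x| ^ n * Real.exp (-(x ^ 2 / 2)))
          = |a| * (|x| ^ (k + n) * Real.exp (-(x ^ 2 / 2))) := by rw [pow_add]; ring
        _ ≤ |a| * (2 ^ (k + n) * (k + n).factorial) :=
            mul_le_mul_of_nonneg_left (pow_mul_gauss_le (k + n) x) (abs_nonneg a)

def gaussSchwartz : SchwartzMap ℝ ℝ where
  toFun := fun x => Real.exp (-(x ^ 2 / 2))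
  smooth' := by
    exact ContDiff.exp (((contDiff_id.pow 2).div_const 2).neg)
  decay' := by
    intro k n
    obtain ⟨C, hC⟩ := poly_gauss_bound ((Polynomial.hermite n).map (algebraMap ℤ ℝ)) k
    refine ⟨C, fun x => ?_⟩
    rw [norm_iteratedFDeriv_eq_norm_iteratedDeriv, iteratedDeriv_eq_iterate,
      Polynomial.deriv_gaussian_eq_hermite_mul_gaussian]
    have haev : aeval x (Polynomial.hermite n) =
        Polynomial.eval x ((Polynomial.hermite n).map (algebraMap ℤ ℝ)) := by
      rw [Polynomial.eval_map]; rfl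
    have : ‖(-1 : ℝ) ^ n * aeval x (Polynomial.hermite n) * Real.exp (-(x ^ 2 / 2))‖
        = |Polynomial.eval x ((Polynomial.hermite n).map (algebraMap ℤ ℝ))|
          * Real.exp (-(x ^ 2 / 2)) := by
      rw [Real.norm_eq_abs, abs_mul, abs_mul, abs_pow, abs_neg, abs_one, one_pow, one_mul,
        haev, Real.abs_exp]
    rw [this, Real.norm_eq_abs]
    exact hC x

def FT (f : ℝ → ℝ) (ν : ℝ) : ℂ := ∫ s : ℝ, Complex.exp (-(Complex.I * ν * s)) * (f s : ℂ)

lemma norm_exp_I_eq_one (ν s : ℝ) : ‖Complex.exp (-(Complex.I * ν * s))‖ = 1 := by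
  rw [Complex.norm_exp]
  simp [Complex.mul_re, Complex.mul_im]

lemma ft_integrand_integrable (φ : SchwartzMap ℝ ℝ) (ν : ℝ) :
    Integrable (fun s : ℝ => Complex.exp (-(Complex.I * ν * s)) * (φ s : ℂ)) := by
  refine (φ.integrable (μ := volume)).ofReal.bdd_mul ?_ (Filter.Eventually.of_forall fun s => (norm_exp_I_eq_one ν s).le)
  exact (Complex.continuous_exp.comp (by fun_prop)).aestronglyMeasurable

lemma ft_norm_le (φ : SchwartzMap ℝ ℝ) (ν : ℝ) : ‖FT φ ν‖ ≤ ∫ s : ℝ, ‖φ s‖ := by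
  refine (norm_integral_le_integral_norm _).trans (le_of_eq ?_)
  congr 1
  funext s
  rw [norm_mul, norm_exp_I_eq_one, one_mul, Complex.norm_real]

lemma ft_continuous (φ : SchwartzMap ℝ ℝ) : Continuous (FT φ) := by
  apply continuous_of_dominated (bound := fun s : ℝ => ‖φ s‖)
  · intro ν
    exact (ft_integrand_integrable φ ν).aestronglyMeasurable
  · intro ν
    refine Filter.Eventually.of_forall fun s => ?_
    rw [norm_mul, norm_exp_I_eq_one, one_mul, Complex.norm_real]
  · exact (φ.integrable (μ := volume)).norm
  · refine Filter.Eventually.of_forall fun s => ?_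
    exact (Complex.continuous_exp.comp (by fun_prop)).mul continuous_const

lemma ft_add (φ ψ : SchwartzMap ℝ ℝ) (ν : ℝ) : FT (φ + ψ) ν = FT φ ν + FT ψ ν := by
  unfold FT
  rw [← integral_add (ft_integrand_integrable φ ν) (ft_integrand_integrable ψ ν)]
  congr 1
  funext s
  simp only [Pi.add_apply, Complex.ofReal_add]
  ring

lemma ft_smul (c : ℝ) (φ : SchwartzMap ℝ ℝ) (ν : ℝ) : FT (c • φ) ν = (c : ℂ) * FT φ ν := by
  unfold FT
  calc ∫ s : ℝ, Complex.exp (-(Complex.I * ν * s)) * ((c • ⇑φ) s : ℂ)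
      = ∫ s : ℝ, (c : ℂ) • (Complex.exp (-(Complex.I * ν * s)) * (φ s : ℂ)) := by
        congr 1
        funext s
        simp only [Pi.smul_apply, smul_eq_mul, Complex.ofReal_mul]
        ring
    _ = (c : ℂ) • ∫ s : ℝ, Complex.exp (-(Complex.I * ν * s)) * (φ s : ℂ) := integral_smul _ _
    _ = (c : ℂ) * ∫ s : ℝ, Complex.exp (-(Complex.I * ν * s)) * (φ s : ℂ) := rfl

lemma ft_sub (φ ψ : SchwartzMap ℝ ℝ) (ν : ℝ) : FT (φ - ψ) ν = FT φ ν - FT ψ ν := by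
  unfold FT
  rw [← integral_sub (ft_integrand_integrable φ ν) (ft_integrand_integrable ψ ν)]
  congr 1
  funext s
  simp only [Pi.sub_apply, Complex.ofReal_sub]
  ring

lemma ft_gauss_ne_zero (ν : ℝ) : FT (fun x => Real.exp (-(x ^ 2 / 2))) ν ≠ 0 := by
  have hb : (0 : ℝ) < ((1 / 2 : ℂ)).re := by norm_num
  have h := fourierIntegral_gaussian hb (-ν : ℂ)
  have heq : FT (fun x => Real.exp (-(x ^ 2 / 2))) ν
      = ∫ x : ℝ, Complex.exp (Complex.I * (-ν : ℂ) * x) * Complex.exp (-(1 / 2 : ℂ) * x ^ 2) := by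
    unfold FT
    congr 1
    funext s
    rw [Complex.ofReal_exp]
    rw [← Complex.exp_add, ← Complex.exp_add]
    congr 1
    push_cast
    ring
  rw [heq, h]
  apply mul_ne_zero
  · rw [Ne, Complex.cpow_eq_zero_iff]
    intro ⟨h1, _⟩
    rw [_root_.div_eq_zero_iff] at h1
    rcases h1 with h1 | h1
    · exact Real.pi_ne_zero (by exact_mod_cast h1)
    · norm_num at h1
  · exact Complex.exp_ne_zero _

abbrev q1 : Seminorm ℝ (SchwartzMap ℝ ℝ) := SchwartzMap.seminorm ℝ 0 0
abbrev q2 : Seminorm ℝ (SchwartzMap ℝ ℝ) :=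
  SchwartzMap.seminorm ℝ (volume : Measure ℝ).integrablePower 0

def Dconst : ℝ := 2 ^ (volume : Measure ℝ).integrablePower *
    ∫ x : ℝ, (1 + ‖x‖) ^ (-((volume : Measure ℝ).integrablePower : ℝ))

lemma l1_le (φ : SchwartzMap ℝ ℝ) : (∫ x : ℝ, ‖φ x‖) ≤ Dconst * (q1 φ + q2 φ) := by
  have h := SchwartzMap.integral_pow_mul_iteratedFDeriv_le ℝ (volume : Measure ℝ) φ 0 0
  simp only [pow_zero, one_mul, norm_iteratedFDeriv_zero] at h
  simpa [Dconst, mul_assoc] using h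

lemma l1_nonneg (φ : SchwartzMap ℝ ℝ) : (0:ℝ) ≤ ∫ x : ℝ, ‖φ x‖ :=
  integral_nonneg fun x => norm_nonneg _

lemma q_cont : Continuous fun φ : SchwartzMap ℝ ℝ => Dconst * (q1 φ + q2 φ) := by
  have h1 : Continuous fun φ : SchwartzMap ℝ ℝ => q1 φ :=
    (schwartz_withSeminorms ℝ ℝ ℝ).continuous_seminorm (0, 0)
  have h2 : Continuous fun φ : SchwartzMap ℝ ℝ => q2 φ :=
    (schwartz_withSeminorms ℝ ℝ ℝ).continuous_seminorm
      ((volume : Measure ℝ).integrablePower, 0)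
  exact continuous_const.mul (h1.add h2)

def Lmap (m : Measure ℝ) (φ : SchwartzMap ℝ ℝ) : ℂ :=
  ∫ ν, (starRingEnd ℂ) (FT (⇑gaussSchwartz) ν) * FT (⇑φ) ν ∂m

lemma pair_cont (φ ψ : SchwartzMap ℝ ℝ) :
    Continuous fun ν => (starRingEnd ℂ) (FT (⇑φ) ν) * FT (⇑ψ) ν :=
  (Complex.continuous_conj.comp (ft_continuous φ)).mul (ft_continuous ψ)

lemma pair_norm_le (φ ψ : SchwartzMap ℝ ℝ) (ν : ℝ) :
    ‖(starRingEnd ℂ) (FT (⇑φ) ν) * FT (⇑ψ) ν‖ ≤ (∫ x : ℝ, ‖φ x‖) * ∫ x : ℝ, ‖ψ x‖ := by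
  rw [norm_mul, RCLike.norm_conj]
  exact mul_le_mul (ft_norm_le φ ν) (ft_norm_le ψ ν) (norm_nonneg _) (l1_nonneg φ)

lemma pair_integrable (m : Measure ℝ) [IsFiniteMeasure m] (φ ψ : SchwartzMap ℝ ℝ) :
    Integrable (fun ν => (starRingEnd ℂ) (FT (⇑φ) ν) * FT (⇑ψ) ν) m := by
  refine Integrable.mono' (integrable_const ((∫ x : ℝ, ‖φ x‖) * ∫ x : ℝ, ‖ψ x‖))
    (pair_cont φ ψ).aestronglyMeasurable (Filter.Eventually.of_forall fun ν => ?_)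
  exact pair_norm_le φ ψ ν

lemma Lmap_zero (m : Measure ℝ) : Lmap m 0 = 0 := by
  unfold Lmap
  have : ∀ ν : ℝ, FT (⇑(0 : SchwartzMap ℝ ℝ)) ν = 0 := by
    intro ν
    unfold FT
    simp
  simp only [this, mul_zero, integral_zero]

lemma Lmap_add (m : Measure ℝ) [IsFiniteMeasure m] (φ ψ : SchwartzMap ℝ ℝ) :
    Lmap m (φ + ψ) = Lmap m φ + Lmap m ψ := by
  unfold Lmap
  rw [← integral_add (pair_integrable m gaussSchwartz φ) (pair_integrable m gaussSchwartz ψ)]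
  congr 1
  funext ν
  have : FT (⇑(φ + ψ)) ν = FT (⇑φ) ν + FT (⇑ψ) ν := by
    have hcoe : ⇑(φ + ψ) = ⇑φ + ⇑ψ := rfl
    rw [hcoe, ft_add]
  rw [this, mul_add]

lemma Lmap_smul (m : Measure ℝ) (c : ℝ) (φ : SchwartzMap ℝ ℝ) :
    Lmap m (c • φ) = (c : ℂ) * Lmap m φ := by
  unfold Lmap
  have h1 : ∀ ν : ℝ, (starRingEnd ℂ) (FT (⇑gaussSchwartz) ν) * FT (⇑(c • φ)) ν
      = (c : ℂ) • ((starRingEnd ℂ) (FT (⇑gaussSchwartz) ν) * FT (⇑φ) ν) := by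
    intro ν
    have hcoe : ⇑(c • φ) = c • ⇑φ := rfl
    rw [hcoe, ft_smul, smul_eq_mul]
    ring
  simp only [h1]
  rw [integral_smul, smul_eq_mul]

lemma Lmap_sub (m : Measure ℝ) [IsFiniteMeasure m] (φ ψ : SchwartzMap ℝ ℝ) :
    Lmap m (φ - ψ) = Lmap m φ - Lmap m ψ := by
  unfold Lmap
  rw [← integral_sub (pair_integrable m gaussSchwartz φ) (pair_integrable m gaussSchwartz ψ)]
  congr 1
  funext ν
  have : FT (⇑(φ - ψ)) ν = FT (⇑φ) ν - FT (⇑ψ) ν := by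
    have hcoe : ⇑(φ - ψ) = ⇑φ - ⇑ψ := rfl
    rw [hcoe, ft_sub]
  rw [this, mul_sub]

lemma Lmap_cont (m : Measure ℝ) [IsFiniteMeasure m] : Continuous (Lmap m) := by
  rw [continuous_iff_continuousAt]
  intro φ₀
  have key : ∀ φ : SchwartzMap ℝ ℝ, ‖Lmap m φ - Lmap m φ₀‖ ≤
      ((∫ x : ℝ, ‖gaussSchwartz x‖) * (Dconst * (q1 (φ - φ₀) + q2 (φ - φ₀))))
        * (m Set.univ).toReal := by
    intro φ
    rw [← Lmap_sub m φ φ₀]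
    refine norm_integral_le_of_norm_le_const (Filter.Eventually.of_forall fun ν => ?_)
    refine (pair_norm_le gaussSchwartz (φ - φ₀) ν).trans ?_
    exact mul_le_mul_of_nonneg_left (l1_le (φ - φ₀)) (l1_nonneg gaussSchwartz)
  have tend0 : Filter.Tendsto
      (fun φ : SchwartzMap ℝ ℝ => ((∫ x : ℝ, ‖gaussSchwartz x‖)
        * (Dconst * (q1 (φ - φ₀) + q2 (φ - φ₀)))) * (m Set.univ).toReal)
      (nhds φ₀) (nhds 0) := by
    have hc : Continuous fun φ : SchwartzMap ℝ ℝ =>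
        ((∫ x : ℝ, ‖gaussSchwartz x‖) * (Dconst * (q1 (φ - φ₀) + q2 (φ - φ₀))))
          * (m Set.univ).toReal := by
      refine ((continuous_const.mul (q_cont.comp ?_)).mul continuous_const)
      exact continuous_id.sub continuous_const
    have := hc.tendsto φ₀
    simpa using this
  unfold ContinuousAt
  rw [← tendsto_sub_nhds_zero_iff]
  exact squeeze_zero_norm key tend0

lemma sq_abs_ft_integrable (m : Measure ℝ) [IsFiniteMeasure m] (φ : SchwartzMap ℝ ℝ) :
    Integrable (fun ν => ‖FT (⇑φ) ν‖ ^ 2) m := by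
  refine Integrable.mono' (integrable_const ((∫ x : ℝ, ‖φ x‖) ^ 2))
    (((continuous_norm.comp (ft_continuous φ)).pow 2).aestronglyMeasurable)
    (Filter.Eventually.of_forall fun ν => ?_)
  rw [Real.norm_eq_abs, abs_of_nonneg (by positivity)]
  have h1 := ft_norm_le φ ν
  have h0 := norm_nonneg (FT (⇑φ) ν)
  nlinarith

/-- If the AC-part of a finite positive measure `μ` is non-trivial, i.e.
`μ(ℝ∖{0}) > 0`, then the set of real Schwartz functions `φ` with
`∫_{ℝ∖{0}} |φ̂(ν)|² dμ(ν) = 0` is meager in the Fréchet space `𝒮(ℝ;ℝ)`. -/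
theorem ac_zero_heat_set_meager (μ : Measure ℝ) [IsFiniteMeasure μ]
    (hμ : 0 < μ ({(0 : ℝ)}ᶜ)) :
    IsMeagre {φ : SchwartzMap ℝ ℝ |
      ∫ ν in ({(0 : ℝ)}ᶜ : Set ℝ),
        ‖∫ s : ℝ, Complex.exp (-(Complex.I * ν * s)) * (φ s : ℂ)‖ ^ 2 ∂μ = 0} := by
  set m : Measure ℝ := μ.restrict ({(0 : ℝ)}ᶜ) with hm
  haveI : IsFiniteMeasure m := by
    constructor
    rw [hm, Measure.restrict_apply_univ]
    exact measure_lt_top μ _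
  set K : Set (SchwartzMap ℝ ℝ) := {φ | Lmap m φ = 0} with hK
  have hZK : {φ : SchwartzMap ℝ ℝ |
      ∫ ν in ({(0 : ℝ)}ᶜ : Set ℝ),
        ‖∫ s : ℝ, Complex.exp (-(Complex.I * ν * s)) * (φ s : ℂ)‖ ^ 2 ∂μ = 0}
      ⊆ K := by
    intro φ hφ
    have hφ' : ∫ ν, ‖FT (⇑φ) ν‖ ^ 2 ∂m = 0 := hφ
    have h0 := (integral_eq_zero_iff_of_nonneg (fun ν => by positivity)
      (sq_abs_ft_integrable m φ)).mp hφ'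
    have h1 : ∀ᵐ ν ∂m, FT (⇑φ) ν = 0 := by
      filter_upwards [h0] with ν hν
      have h2 : ‖FT (⇑φ) ν‖ ^ 2 = 0 := hν
      have h3 : ‖FT (⇑φ) ν‖ = 0 := by
        nlinarith [norm_nonneg (FT (⇑φ) ν)]
      exact norm_eq_zero.mp h3
    show Lmap m φ = 0
    unfold Lmap
    refine integral_eq_zero_of_ae ?_
    filter_upwards [h1] with ν hν
    rw [hν, mul_zero]
    rfl
  have hgauss : Lmap m gaussSchwartz ≠ 0 := by
    intro h
    have habs : Lmap m gaussSchwartz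
        = ((∫ ν, ‖FT (⇑gaussSchwartz) ν‖ ^ 2 ∂m : ℝ) : ℂ) := by
      unfold Lmap
      calc ∫ ν, (starRingEnd ℂ) (FT (⇑gaussSchwartz) ν) * FT (⇑gaussSchwartz) ν ∂m
          = ∫ ν, ((‖FT (⇑gaussSchwartz) ν‖ ^ 2 : ℝ) : ℂ) ∂m := by
            congr 1
            funext ν
            rw [← Complex.normSq_eq_conj_mul_self, Complex.normSq_eq_norm_sq]
        _ = ((∫ ν, ‖FT (⇑gaussSchwartz) ν‖ ^ 2 ∂m : ℝ) : ℂ) := integral_ofReal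
    rw [h] at habs
    have hre : ∫ ν, ‖FT (⇑gaussSchwartz) ν‖ ^ 2 ∂m = 0 :=
      Complex.ofReal_eq_zero.mp habs.symm
    have hae := (integral_eq_zero_iff_of_nonneg (fun ν => by positivity)
      (sq_abs_ft_integrable m gaussSchwartz)).mp hre
    have hfalse : ∀ᵐ ν ∂m, False := by
      filter_upwards [hae] with ν hν
      have h2 : ‖FT (⇑gaussSchwartz) ν‖ ^ 2 = 0 := hν
      have h3 : FT (⇑gaussSchwartz) ν ≠ 0 := ft_gauss_ne_zero ν
      have h4 : ‖FT (⇑gaussSchwartz) ν‖ = 0 := by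
        nlinarith [norm_nonneg (FT (⇑gaussSchwartz) ν)]
      exact h3 (norm_eq_zero.mp h4)
    have huniv : m Set.univ = 0 := by simpa [ae_iff] using hfalse
    rw [hm, Measure.restrict_apply_univ] at huniv
    exact hμ.ne' huniv
  have hKclosed : IsClosed K := isClosed_eq (Lmap_cont m) continuous_const
  have hKint : interior K = ∅ := by
    by_contra hne
    have hne' : (interior K).Nonempty := Set.nonempty_iff_ne_empty.mpr hne
    let Ksub : Submodule ℝ (SchwartzMap ℝ ℝ) :=
      { carrier := K
        add_mem' := by
          intro a b ha hb
          have ha' : Lmap m a = 0 := ha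
          have hb' : Lmap m b = 0 := hb
          show Lmap m (a + b) = 0
          rw [Lmap_add m, ha', hb', add_zero]
        zero_mem' := Lmap_zero m
        smul_mem' := by
          intro c φ hφ
          have hφ' : Lmap m φ = 0 := hφ
          show Lmap m (c • φ) = 0
          rw [Lmap_smul m, hφ', mul_zero] }
    haveI : Filter.NeBot (nhdsWithin (0 : ℝ) {x : ℝ | IsUnit x}) := by
      have hset : {x : ℝ | IsUnit x} = {(0 : ℝ)}ᶜ := Set.ext fun x => by
        simp [isUnit_iff_ne_zero]
      rw [hset]
      exact NormedField.nhdsNE_neBot (0 : ℝ)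
    have htop : Ksub = ⊤ := Submodule.eq_top_of_nonempty_interior' Ksub hne'
    have hmem : gaussSchwartz ∈ Ksub := htop ▸ Submodule.mem_top
    exact hgauss hmem
  rw [isMeagre_iff_countable_union_isNowhereDense]
  refine ⟨{K}, ?_, Set.countable_singleton K, by rw [Set.sUnion_singleton]; exact hZK⟩
  intro t ht
  rw [Set.mem_singleton_iff] at ht
  subst ht
  show interior (closure K) = ∅
  rw [hKclosed.closure_eq]
  exact hKint
end
end

section
/- Let (μ_n) be a sequence of finite positive Borel measures on ℝ with sup_n μ_n(ℝ) < ∞, and suppose that for every t ∈ ℝ, ∫_ℝ (1 − cos(tν)) dμ_n(ν) → 0 as n → ∞. Then for every bounded continuous function f : ℝ → ℝ that vanishes on some neighborhood of 0, ∫_ℝ f(ν) dμ_n(ν) → 0 as n → ∞; equivalently, the restrictions μ_n|_{ℝ∖{0}} converge to the trivial measure in the weak*-topology. (Uniform vanishing of the paramagnetic conductivities implies weak*-convergence of the AC-conductivity measures to the trivial measure, as in the limits of perfect conductors and perfect insulators.) -/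
open MeasureTheory Filter

/-- If the paramagnetic conductivities of a uniformly bounded sequence of finite
positive measures vanish pointwise, i.e. `∫ (1 − cos(tν)) dμ_n(ν) → 0` for every
`t`, then the AC-parts `μ_n|_{ℝ∖{0}}` converge weak* to the trivial measure:
`∫ f dμ_n → 0` for every bounded continuous `f` vanishing near `0`. -/
theorem ac_measures_weak_star_trivial (μ : ℕ → Measure ℝ)
    [∀ n, IsFiniteMeasure (μ n)] (hsup : (⨆ n, μ n Set.univ) < ⊤)
    (hpara : ∀ t : ℝ,
      Tendsto (fun n : ℕ => ∫ ν : ℝ, (1 - Real.cos (t * ν)) ∂(μ n)) atTop (nhds 0))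
    (f : ℝ → ℝ) (hf : Continuous f) (hb : ∃ M : ℝ, ∀ x : ℝ, |f x| ≤ M)
    (h0 : ∀ᶠ x in nhds (0 : ℝ), f x = 0) :
    Tendsto (fun n : ℕ => ∫ ν : ℝ, f ν ∂(μ n)) atTop (nhds 0) := by
  obtain ⟨M, hM⟩ := hb
  have hM0 : 0 ≤ M := le_trans (abs_nonneg _) (hM 0)
  obtain ⟨δ, hδ, hfδ⟩ := Metric.eventually_nhds_iff.mp h0
  set T : ℝ := 2 / δ with hTdef
  have hT0 : 0 < T := by positivity
  -- uniform bound
  obtain ⟨C, hC⟩ : ∃ C : ℝ, ∀ n, ((μ n) Set.univ).toReal ≤ C :=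
    ⟨(⨆ n, μ n Set.univ).toReal, fun n =>
      ENNReal.toReal_mono hsup.ne (le_iSup (fun n => μ n Set.univ) n)⟩
  -- the averaged kernel
  set h : ℝ → ℝ := fun ν => ∫ t in Set.Ioc (0:ℝ) T, (1 - Real.cos (t * ν)) with hh
  have hcont2 : Continuous (fun p : ℝ × ℝ => 1 - Real.cos (p.1 * p.2)) :=
    continuous_const.sub (Real.continuous_cos.comp (continuous_fst.mul continuous_snd))
  have hbound2 : ∀ x : ℝ, |1 - Real.cos x| ≤ 2 := by
    intro x
    rw [abs_le]
    constructor <;> nlinarith [Real.cos_le_one x, Real.neg_one_le_cos x]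
  -- explicit formula for h on ν ≠ 0
  have hval : ∀ ν : ℝ, ν ≠ 0 → h ν = T - Real.sin (T * ν) / ν := by
    intro ν hν
    have : h ν = ∫ t in (0:ℝ)..T, (1 - Real.cos (t * ν)) := by
      rw [intervalIntegral.integral_of_le hT0.le]
    rw [this]
    have hderiv : ∀ t ∈ Set.uIcc (0:ℝ) T,
        HasDerivAt (fun s : ℝ => s - Real.sin (s * ν) / ν) (1 - Real.cos (t * ν)) t := by
      intro t _
      have h1 : HasDerivAt (fun s : ℝ => Real.sin (s * ν)) (Real.cos (t * ν) * ν) t := by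
        have := (Real.hasDerivAt_sin (t * ν)).comp t ((hasDerivAt_id t).mul_const ν)
        simpa [Function.comp_def] using this
      have h2 := (hasDerivAt_id t).sub (h1.div_const ν)
      have he : Real.cos (t * ν) * ν / ν = Real.cos (t * ν) := by field_simp
      rw [he] at h2
      exact h2
    have hint : IntervalIntegrable (fun t : ℝ => 1 - Real.cos (t * ν)) volume 0 T :=
      (continuous_const.sub (Real.continuous_cos.comp (continuous_id.mul
        continuous_const))).intervalIntegrable 0 T
    rw [intervalIntegral.integral_eq_sub_of_hasDerivAt hderiv hint]
    simp
  have hnn : ∀ ν : ℝ, 0 ≤ h ν := by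
    intro ν
    rcases eq_or_ne ν 0 with rfl | hν
    · simp [hh]
    · rw [hval ν hν]
      have : |Real.sin (T * ν) / ν| ≤ T := by
        rw [abs_div]
        rw [div_le_iff₀ (abs_pos.mpr hν)]
        calc |Real.sin (T * ν)| ≤ |T * ν| := Real.abs_sin_le_abs
          _ = T * |ν| := by rw [abs_mul, abs_of_pos hT0]
      linarith [(abs_le.mp this).2]
  -- pointwise bound
  have hpt : ∀ ν : ℝ, |f ν| ≤ 2 * M / T * h ν := by
    intro ν
    rcases lt_or_ge (|ν|) δ with hlt | hge
    · have : f ν = 0 := hfδ (by simpa [Real.dist_eq] using hlt)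
      rw [this]
      simp only [abs_zero]
      exact mul_nonneg (by positivity) (hnn ν)
    · have hν : ν ≠ 0 := by
        intro h; rw [h] at hge; simp at hge; linarith
      have h1 : Real.sin (T * ν) / ν ≤ 1 / δ := by
        have : |Real.sin (T * ν) / ν| ≤ 1 / δ := by
          rw [abs_div]
          exact div_le_div₀ zero_le_one
            (abs_le.mpr ⟨Real.neg_one_le_sin _, Real.sin_le_one _⟩) hδ hge
        exact (abs_le.mp this).2
      have h2 : (1:ℝ) / δ ≤ h ν := by
        rw [hval ν hν, hTdef]
        have : 2 / δ - 1 / δ = 1 / δ := by field_simp; norm_num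
        linarith
      calc |f ν| ≤ M := hM ν
        _ = 2 * M / T * (1 / δ) := by rw [hTdef]; field_simp
        _ ≤ 2 * M / T * h ν := by
            apply mul_le_mul_of_nonneg_left h2 (by positivity)
  -- integrability facts
  have hintf : ∀ n, Integrable f (μ n) :=
    fun n => (integrable_const M).mono' hf.aestronglyMeasurable
      (Eventually.of_forall fun x => by rw [Real.norm_eq_abs]; exact hM x)
  have hIocfin : IsFiniteMeasure (volume.restrict (Set.Ioc (0:ℝ) T)) := by
    constructor
    rw [Measure.restrict_apply_univ, Real.volume_Ioc]
    exact ENNReal.ofReal_lt_top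
  have hsm : StronglyMeasurable (fun p : ℝ × ℝ => 1 - Real.cos (p.1 * p.2)) :=
    hcont2.stronglyMeasurable
  have hmeash : StronglyMeasurable h := by
    exact hsm.integral_prod_left' (μ := volume.restrict (Set.Ioc (0:ℝ) T))
  have hinth : ∀ n, Integrable h (μ n) := by
    intro n
    apply (integrable_const (2 * T)).mono' hmeash.aestronglyMeasurable
    refine Eventually.of_forall fun ν => ?_
    rw [Real.norm_eq_abs, ← Real.norm_eq_abs]
    calc ‖h ν‖ ≤ 2 * (volume.restrict (Set.Ioc (0:ℝ) T) Set.univ).toReal :=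
          norm_integral_le_of_norm_le_const
            (Eventually.of_forall fun t => by
              rw [Real.norm_eq_abs]; exact hbound2 _)
      _ = 2 * T := by
          rw [Measure.restrict_apply_univ, Real.volume_Ioc]
          rw [ENNReal.toReal_ofReal (by linarith)]
          ring_nf
  -- Fubini
  have hfub : ∀ n, ∫ ν, h ν ∂(μ n)
      = ∫ t in Set.Ioc (0:ℝ) T, (∫ ν, (1 - Real.cos (t * ν)) ∂(μ n)) := by
    intro n
    have hint2 : Integrable (Function.uncurry fun t ν => 1 - Real.cos (t * ν))
        ((volume.restrict (Set.Ioc (0:ℝ) T)).prod (μ n)) := by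
      apply (integrable_const 2).mono' hcont2.aestronglyMeasurable
      exact Eventually.of_forall fun p => by
        rw [Real.norm_eq_abs]; exact hbound2 _
    exact (integral_integral_swap hint2).symm
  -- the double integral tends to 0
  have hG : Tendsto (fun n : ℕ =>
      ∫ t in Set.Ioc (0:ℝ) T, (∫ ν, (1 - Real.cos (t * ν)) ∂(μ n)))
      atTop (nhds 0) := by
    have h0' : (0:ℝ) = ∫ t in Set.Ioc (0:ℝ) T, (0:ℝ) := by simp
    rw [show nhds (0:ℝ) = nhds (∫ t in Set.Ioc (0:ℝ) T, (0:ℝ)) by simp]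
    apply tendsto_integral_of_dominated_convergence (fun _ => 2 * C)
    · intro n
      exact ((hsm.integral_prod_right' (ν := μ n)).aestronglyMeasurable).restrict
    · exact integrable_const _
    · intro n
      refine Eventually.of_forall fun t => ?_
      calc ‖∫ ν, (1 - Real.cos (t * ν)) ∂(μ n)‖
          ≤ 2 * ((μ n) Set.univ).toReal :=
            norm_integral_le_of_norm_le_const
              (Eventually.of_forall fun ν => by
                rw [Real.norm_eq_abs]; exact hbound2 _)
        _ ≤ 2 * C := by nlinarith [hC n, ENNReal.toReal_nonneg (a := (μ n) Set.univ)]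
    · exact Eventually.of_forall fun t => hpara t
  -- squeeze
  have key : ∀ n, ‖∫ ν, f ν ∂(μ n)‖
      ≤ 2 * M / T * ∫ t in Set.Ioc (0:ℝ) T, (∫ ν, (1 - Real.cos (t * ν)) ∂(μ n)) := by
    intro n
    calc ‖∫ ν, f ν ∂(μ n)‖ ≤ ∫ ν, ‖f ν‖ ∂(μ n) := norm_integral_le_integral_norm _
      _ ≤ ∫ ν, 2 * M / T * h ν ∂(μ n) := by
          apply integral_mono (hintf n).norm ((hinth n).const_mul _)
          intro ν
          simpa [Real.norm_eq_abs] using hpt ν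
      _ = 2 * M / T * ∫ ν, h ν ∂(μ n) := integral_const_mul _ _
      _ = _ := by rw [hfub n]
  have : Tendsto (fun n : ℕ => 2 * M / T *
      ∫ t in Set.Ioc (0:ℝ) T, (∫ ν, (1 - Real.cos (t * ν)) ∂(μ n))) atTop (nhds 0) := by
    have := hG.const_mul (2 * M / T)
    simpa using this
  exact squeeze_zero_norm key this
end
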